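/- If K is a countable compact Hausdorff space, then K is homeomorphic to the ordinal interval [1, ω^β · n] with the order topology, where β is an ordinal and n is the (finite, positive) cardinality of the β-th Cantor–Bendixson derived set K^(β). -/

import Mathlib

open Topology Ordinal

/-- The `o`-th Cantor–Bendixson derived set of `A`, obtained by transfinitely
iterating the derived-set operation, with intersections at limit stages. -/
noncomputable def cbIter {X : Type*} [TopologicalSpace X] (A : Set X) (o : Ordinal) : Set X :=
  Ordinal.limitRecOn o A (fun _ S => {x | AccPt x (Filter.principal S)})
    (fun o _ ih => ⋂ i : {b : Ordinal // b < o}, ih i.1 i.2)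

section
open Topology Ordinal Filter

variable {X : Type*} [TopologicalSpace X] {A : Set X}

@[simp] lemma cbIter_zero : cbIter A 0 = A := Ordinal.limitRecOn_zero ..

lemma cbIter_succ (o : Ordinal) : cbIter A (o+1) = derivedSet (cbIter A o) := by
  have := Ordinal.limitRecOn_add_one (motive := fun _ => Set X) o A
    (fun _ S => {x | AccPt x (Filter.principal S)})
    (fun o _ ih => ⋂ i : {b : Ordinal // b < o}, ih i.1 i.2)
  simpa [cbIter, derivedSet] using this

lemma cbIter_limit {o : Ordinal} (h : Order.IsSuccLimit o) :
    cbIter A o = ⋂ i : {b : Ordinal // b < o}, cbIter A i.1 :=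
  Ordinal.limitRecOn_limit _ _ _ _ h

lemma isClosed_cbIter [T1Space X] (hA : IsClosed A) (o : Ordinal) : IsClosed (cbIter A o) := by
  induction o using Ordinal.limitRecOn with
  | zero => simpa
  | add_one o ih => rw [cbIter_succ]; exact isClosed_derivedSet _
  | limit o ho ih => rw [cbIter_limit ho]; exact isClosed_iInter fun i => ih i.1 i.2

lemma cbIter_succ_subset [T1Space X] (hA : IsClosed A) (o : Ordinal) :
    cbIter A (o+1) ⊆ cbIter A o := by
  rw [cbIter_succ]
  exact (isClosed_iff_derivedSet_subset _).mp (isClosed_cbIter hA o)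

lemma cbIter_anti [T1Space X] (hA : IsClosed A) {o o' : Ordinal} (h : o ≤ o') :
    cbIter A o' ⊆ cbIter A o := by
  induction o' using Ordinal.induction with
  | h o' IH =>
    rcases eq_or_lt_of_le h with rfl | hlt
    · exact subset_rfl
    rcases Ordinal.zero_or_succ_or_isSuccLimit o' with h0 | ⟨b, rfl⟩ | hl
    · exact absurd (h0 ▸ hlt) (by simp)
    · rw [← Ordinal.add_one_eq_succ] at *
      exact ((cbIter_succ_subset hA b).trans
        (IH b (lt_add_one b) (by rwa [Ordinal.add_one_eq_succ, Order.lt_succ_iff] at hlt)))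
    · rw [cbIter_limit hl]
      exact Set.iInter_subset_of_subset ⟨o, hlt⟩ subset_rfl

end

section
open Topology Ordinal Filter
variable {X : Type*} [TopologicalSpace X]

lemma derivedSet_of_finite [T1Space X] {S : Set X} (h : S.Finite) : derivedSet S = ∅ := by
  ext x
  simp only [mem_derivedSet, Set.mem_empty_iff_false, iff_false]
  intro hx
  rw [accPt_principal_iff_clusterPt] at hx
  have : x ∈ closure (S \ {x}) := mem_closure_iff_clusterPt.mpr hx
  rw [(h.diff (t := {x})).isClosed.closure_eq] at this
  exact this.2 rfl

lemma derivedSet_preimage_val {U : Set X} (hU : IsOpen U) (S : Set X) :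
    derivedSet ((Subtype.val : U → X) ⁻¹' S) = Subtype.val ⁻¹' (derivedSet S) := by
  ext ⟨x, hx⟩
  have hmap : Filter.map (Subtype.val : U → X) (𝓝 (⟨x, hx⟩ : U)) = 𝓝 x :=
    hU.isOpenEmbedding_subtypeVal.map_nhds_eq ⟨x, hx⟩
  simp only [Set.mem_preimage, mem_derivedSet, accPt_iff_frequently]
  rw [← hmap, Filter.frequently_map]
  apply Filter.frequently_congr
  apply Filter.Eventually.of_forall
  intro y
  simp [Subtype.ext_iff]

lemma cbIter_preimage_val {U : Set X} (hU : IsOpen U) (o : Ordinal) :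
    cbIter (Set.univ : Set U) o = Subtype.val ⁻¹' (cbIter (Set.univ : Set X) o) := by
  induction o using Ordinal.limitRecOn with
  | zero => simp
  | add_one o ih =>
    rw [cbIter_succ, cbIter_succ, ih, derivedSet_preimage_val hU]
  | limit o ho ih =>
    rw [cbIter_limit ho, cbIter_limit ho, Set.preimage_iInter]
    exact Set.iInter_congr fun i => ih i.1 i.2

end

section
open Topology Ordinal Filter
variable {X : Type*}

/-- A nonempty countable compact T2 space has an isolated point. -/
lemma exists_isolated (Y : Type*) [TopologicalSpace Y] [CompactSpace Y] [T2Space Y]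
    [Countable Y] [Nonempty Y] : ∃ y : Y, IsOpen ({y} : Set Y) := by
  have : ∃ y : Y, (interior {y}).Nonempty := by
    apply nonempty_interior_of_iUnion_of_closed (f := fun y : Y => ({y} : Set Y))
    · exact fun y => isClosed_singleton
    · ext y; simp
  obtain ⟨y, hy⟩ := this
  refine ⟨y, ?_⟩
  have h1 : interior ({y} : Set Y) = {y} := by
    apply subset_antisymm interior_subset
    obtain ⟨z, hz⟩ := hy
    have hzy : z ∈ ({y} : Set Y) := interior_subset hz
    intro w hw
    have hwy : w = y := hw
    subst hwy
    exact (Set.mem_singleton_iff.mp hzy) ▸ hz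
  rw [← h1]; exact isOpen_interior

variable [TopologicalSpace X] [CompactSpace X] [T2Space X] [Countable X]

lemma exists_cb_finite_nonempty [Nonempty X] :
    ∃ β : Ordinal.{v}, (cbIter (Set.univ : Set X) β).Finite ∧
      (cbIter (Set.univ : Set X) β).Nonempty := by
  classical
  -- Step 1: there is a fixed point
  have hfix : ∃ o : Ordinal.{v}, cbIter (Set.univ : Set X) (o+1) = cbIter (Set.univ : Set X) o := by
    by_contra hne
    push_neg at hne
    have hstrict : ∀ o : Ordinal.{v}, ∃ x, x ∈ cbIter (Set.univ : Set X) o ∧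
        x ∉ cbIter (Set.univ : Set X) (o+1) := by
      intro o
      have hsub := cbIter_succ_subset (A := (Set.univ : Set X)) isClosed_univ o
      rcases Set.exists_of_ssubset ⟨hsub, fun h => hne o (subset_antisymm hsub h)⟩ with ⟨x, hx1, hx2⟩
      exact ⟨x, hx1, hx2⟩
    choose pt hpt1 hpt2 using hstrict
    obtain ⟨g, hg⟩ := Countable.exists_injective_nat X
    apply not_injective_of_ordinal (g ∘ pt)
    intro a b hab
    have hab' : pt a = pt b := hg hab
    by_contra hne'
    rcases lt_or_gt_of_ne hne' with h | h
    · exact hpt2 a (hab' ▸ (cbIter_anti isClosed_univ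
        (by rw [Ordinal.add_one_eq_succ]; exact Order.succ_le_iff.mpr h) (hpt1 b)))
    · exact hpt2 b (hab'.symm ▸ (cbIter_anti isClosed_univ
        (by rw [Ordinal.add_one_eq_succ]; exact Order.succ_le_iff.mpr h) (hpt1 a)))
  obtain ⟨ostar, hostar⟩ := hfix
  -- Step 2: the fixed point must be empty
  have hempty : cbIter (Set.univ : Set X) ostar = ∅ := by
    by_contra hne
    set S := cbIter (Set.univ : Set X) ostar with hS
    have hScl : IsClosed S := isClosed_cbIter isClosed_univ _
    have hSne : S.Nonempty := Set.nonempty_iff_ne_empty.mpr hne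
    have : CompactSpace S := isCompact_iff_compactSpace.mp hScl.isCompact
    have : Nonempty S := hSne.to_subtype
    obtain ⟨⟨y, hyS⟩, hyopen⟩ := exists_isolated S
    rw [isOpen_induced_iff] at hyopen
    obtain ⟨V, hV, hVy⟩ := hyopen
    -- y is an accumulation point of S
    have hacc : AccPt y (𝓟 S) := by
      have : y ∈ derivedSet S := by
        rw [hS, ← cbIter_succ ostar, hostar]; exact hyS
      exact this
    rw [accPt_iff_nhds] at hacc
    obtain ⟨z, ⟨hzV, hzS⟩, hzy⟩ := hacc V (hV.mem_nhds (by
      have : (⟨y, hyS⟩ : S) ∈ (Subtype.val ⁻¹' V : Set S) := by rw [hVy]; rfl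
      exact this))
    have : (⟨z, hzS⟩ : S) ∈ (Subtype.val ⁻¹' V : Set S) := hzV
    rw [hVy] at this
    exact hzy (congrArg Subtype.val this)
  -- Step 3: least empty stage is a successor, predecessor is finite
  have hTne : {o : Ordinal.{v} | cbIter (Set.univ : Set X) o = ∅}.Nonempty := ⟨ostar, hempty⟩
  set o₀ := Ordinal.lt_wf.min _ hTne with ho₀
  have ho₀mem : cbIter (Set.univ : Set X) o₀ = ∅ := Ordinal.lt_wf.min_mem _ hTne
  have ho₀min : ∀ o < o₀, (cbIter (Set.univ : Set X) o).Nonempty := by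
    intro o ho
    rw [Set.nonempty_iff_ne_empty]
    intro h
    exact Ordinal.lt_wf.not_lt_min _ h ho
  rcases Ordinal.zero_or_succ_or_isSuccLimit o₀ with h0 | ⟨b, hb⟩ | hl
  · exfalso
    rw [h0] at ho₀mem
    simp only [cbIter_zero] at ho₀mem
    exact (Set.nonempty_iff_ne_empty.mp Set.univ_nonempty) ho₀mem
  · -- successor case: cbIter b is nonempty with empty derived set, hence finite
    rw [← Ordinal.add_one_eq_succ, eq_comm] at hb
    set S := cbIter (Set.univ : Set X) b with hSdef
    have hSne : S.Nonempty := ho₀min b (by rw [hb]; exact lt_add_one b)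
    have hScl : IsClosed S := isClosed_cbIter isClosed_univ _
    have hder : derivedSet S = ∅ := by rw [← cbIter_succ, ← hb, ho₀mem]
    refine ⟨b, ?_, hSne⟩
    -- every point of S is isolated in S; compactness gives finiteness
    have hnb : ∀ x ∈ S, ∃ U ∈ 𝓝 x, ∀ y ∈ U ∩ S, y = x := by
      intro x hx
      have : ¬ AccPt x (𝓟 S) := by
        intro h; have : x ∈ derivedSet S := h; rw [hder] at this; exact this
      rw [accPt_iff_nhds] at this
      push_neg at this
      obtain ⟨U, hU, h⟩ := this
      exact ⟨U, hU, h⟩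
    choose! U hU hUx using hnb
    obtain ⟨t, hts, htc⟩ := hScl.isCompact.elim_nhds_subcover U (fun x hx => hU x hx)
    apply Set.Finite.subset t.finite_toSet
    intro y hy
    obtain ⟨x, hxt, hyx⟩ := Set.mem_iUnion₂.mp (htc hy)
    have hyex : y = x := hUx x (hts x hxt) y ⟨hyx, hy⟩
    rw [hyex]; exact hxt
  · -- limit case: impossible by compactness
    exfalso
    have : (cbIter (Set.univ : Set X) o₀).Nonempty := by
      rw [cbIter_limit hl]
      haveI : Nonempty {b : Ordinal.{v} // b < o₀} := ⟨⟨0, hl.pos⟩⟩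
      apply IsCompact.nonempty_iInter_of_directed_nonempty_isCompact_isClosed
      · intro i j
        rcases le_total i.1 j.1 with h | h
        · exact ⟨j, cbIter_anti isClosed_univ h, subset_rfl⟩
        · exact ⟨i, subset_rfl, cbIter_anti isClosed_univ h⟩
      · exact fun i => ho₀min i.1 i.2
      · exact fun i => (isClosed_cbIter isClosed_univ _).isCompact
      · exact fun i => isClosed_cbIter isClosed_univ _
    rw [ho₀mem] at this
    exact Set.not_nonempty_empty this
end

section
open Topology Ordinal Filter
variable {X : Type*} [TopologicalSpace X]

/-- Urysohn trick: in a countable normal T1 space, distinct points are separated by a clopen set. -/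
lemma exists_isClopen_of_countable [NormalSpace X] [T1Space X] [Countable X]
    {x p : X} (h : x ≠ p) : ∃ U : Set X, IsClopen U ∧ x ∈ U ∧ p ∉ U := by
  obtain ⟨f, hf0, hf1, hf01⟩ := exists_continuous_zero_one_of_isClosed
    (isClosed_singleton (x := x)) (isClosed_singleton (x := p))
    (by simp [Set.disjoint_singleton, h])
  have hrange : (Set.range f).Countable := Set.countable_range f
  have : ¬ (Set.Ioo (0:ℝ) 1 ⊆ Set.range f) := by
    intro hsub
    have := hrange.mono hsub
    rw [← Cardinal.le_aleph0_iff_set_countable] at this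
    rw [Cardinal.mk_Ioo_real (by norm_num : (0:ℝ) < 1)] at this
    exact absurd (this.trans_lt Cardinal.aleph0_lt_continuum) (lt_irrefl _)
  rw [Set.not_subset] at this
  obtain ⟨c, hc, hcr⟩ := this
  refine ⟨f ⁻¹' Set.Iio c, ⟨?_, (f.continuous.isOpen_preimage _ isOpen_Iio)⟩, ?_, ?_⟩
  · have : f ⁻¹' Set.Iio c = f ⁻¹' Set.Iic c := by
      ext y
      simp only [Set.mem_preimage, Set.mem_Iio, Set.mem_Iic]
      constructor
      · exact le_of_lt
      · intro hy
        rcases lt_or_eq_of_le hy with h' | h'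
        · exact h'
        · exact absurd (⟨y, h'⟩ : c ∈ Set.range f) hcr
    rw [this]
    exact IsClosed.preimage f.continuous isClosed_Iic
  · simp only [Set.mem_preimage, Set.mem_Iio]
    rw [show f x = 0 from hf0 rfl]
    exact hc.1
  · simp only [Set.mem_preimage, Set.mem_Iio]
    rw [show f p = 1 from hf1 rfl]
    exact not_lt.mpr hc.2.le

/-- continuity of left addition of ordinals -/
lemma continuous_ordinal_add_left (a : Ordinal.{v}) :
    Continuous (fun x : Ordinal.{v} => a + x) :=
  ((Order.isNormal_iff_strictMono_and_continuous).mp (Ordinal.isNormal_add_right a)).2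

/-- Gluing over a clopen partition: `X ≃ [1,a] ⊕ [1,b] ≃ [1,a+b]`. -/
lemma homeo_sum [CompactSpace X] {U : Set X} (hU : IsClopen U) {a b : Ordinal.{v}}
    (e₁ : U ≃ₜ (Set.Icc (1:Ordinal.{v}) a)) (e₂ : (Uᶜ : Set X) ≃ₜ (Set.Icc (1:Ordinal.{v}) b)) :
    Nonempty (X ≃ₜ (Set.Icc (1:Ordinal.{v}) (a+b))) := by
  classical
  set g : X → Ordinal.{v} := fun x =>
    if h : x ∈ U then (e₁ ⟨x, h⟩).1 else a + (e₂ ⟨x, h⟩).1 with hg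
  have hmem : ∀ x, g x ∈ Set.Icc (1:Ordinal.{v}) (a+b) := by
    intro x
    by_cases h : x ∈ U
    · have h1 := (e₁ ⟨x, h⟩).2
      simp only [hg, dif_pos h]
      exact ⟨h1.1, h1.2.trans le_self_add⟩
    · have h1 := (e₂ ⟨x, h⟩).2
      simp only [hg, dif_neg h]
      constructor
      · exact h1.1.trans le_add_self
      · exact add_le_add_right h1.2 a
  have hgU : ∀ (x) (h : x ∈ U), g x = (e₁ ⟨x, h⟩).1 := fun x h => dif_pos h
  have hgUc : ∀ (x) (h : x ∉ U), g x = a + (e₂ ⟨x, h⟩).1 := fun x h => dif_neg h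
  have hUlt : ∀ (x) (h : x ∈ U), g x ≤ a := fun x h => by rw [hgU x h]; exact (e₁ ⟨x, h⟩).2.2
  have hUclt : ∀ (x) (h : x ∉ U), a < g x := fun x h => by
    rw [hgUc x h]
    have := (e₂ ⟨x, h⟩).2.1
    calc a = a + 0 := (add_zero a).symm
    _ < a + (e₂ ⟨x, h⟩).1 := by
      rw [add_lt_add_iff_left]
      exact lt_of_lt_of_le zero_lt_one this
  have hinj : Function.Injective g := by
    intro x y hxy
    by_cases hx : x ∈ U <;> by_cases hy : y ∈ U
    · rw [hgU x hx, hgU y hy] at hxy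
      have := e₁.injective (Subtype.ext hxy)
      exact congrArg Subtype.val this
    · exact absurd hxy (by exact fun h => absurd (h ▸ hUclt y hy) (not_lt.mpr (hUlt x hx)))
    · exact absurd hxy.symm (by exact fun h => absurd (h ▸ hUclt x hx) (not_lt.mpr (hUlt y hy)))
    · rw [hgUc x hx, hgUc y hy] at hxy
      have := add_left_cancel_iff (a := a) |>.mp hxy
      have := e₂.injective (Subtype.ext this)
      exact congrArg Subtype.val this
  have hsurj : ∀ y ∈ Set.Icc (1:Ordinal.{v}) (a+b), ∃ x, g x = y := by
    intro y hy
    by_cases hya : y ≤ a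
    · obtain ⟨x, hx⟩ := e₁.surjective ⟨y, hy.1, hya⟩
      refine ⟨x.1, ?_⟩
      rw [hgU x.1 x.2]
      have : (⟨x.1, x.2⟩ : U) = x := rfl
      rw [this, hx]
    · push_neg at hya
      have h1 : (1:Ordinal.{v}) ≤ y - a := by
        rw [Ordinal.one_le_iff_ne_zero]
        intro h0
        exact absurd (Ordinal.sub_eq_zero_iff_le.mp h0) (not_le.mpr hya)
      have h2 : y - a ≤ b := by
        rw [Ordinal.sub_le]
        exact hy.2
      obtain ⟨x, hx⟩ := e₂.surjective ⟨y - a, h1, h2⟩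
      refine ⟨x.1, ?_⟩
      rw [hgUc x.1 x.2]
      have : (⟨x.1, x.2⟩ : (Uᶜ : Set X)) = x := rfl
      rw [this, hx]
      exact Ordinal.add_sub_cancel_of_le hya.le
  have hcont : Continuous g := by
    rw [continuous_iff_continuousAt]
    intro x
    by_cases hx : x ∈ U
    · apply ContinuousOn.continuousAt _ (hU.2.mem_nhds hx)
      rw [continuousOn_iff_continuous_restrict]
      have : U.domRestrict g = fun u : U => (e₁ u).1 := by
        funext u
        rw [Set.restrict_apply, hgU u.1 u.2]
      rw [this]
      exact continuous_subtype_val.comp e₁.continuous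
    · apply ContinuousOn.continuousAt _ ((hU.1.isOpen_compl).mem_nhds hx)
      rw [continuousOn_iff_continuous_restrict]
      have : (Uᶜ : Set X).domRestrict g = fun u : (Uᶜ : Set X) => a + (e₂ u).1 := by
        funext u
        rw [Set.restrict_apply, hgUc u.1 u.2]
      rw [this]
      exact (continuous_ordinal_add_left a).comp (continuous_subtype_val.comp e₂.continuous)
  let f : X → (Set.Icc (1:Ordinal.{v}) (a+b)) := fun x => ⟨g x, hmem x⟩
  have hfbij : Function.Bijective f := by
    constructor
    · intro x y hxy
      exact hinj (congrArg Subtype.val hxy)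
    · intro ⟨y, hy⟩
      obtain ⟨x, hx⟩ := hsurj y hy
      exact ⟨x, Subtype.ext hx⟩
  have hfcont : Continuous f := hcont.subtype_mk _
  exact ⟨(Continuous.homeoOfEquivCompactToT2 (f := Equiv.ofBijective f hfbij) hfcont)⟩
end

section
open Topology Ordinal Filter

lemma natCast_icc_equiv (n : ℕ) : Nonempty (Fin n ≃ (Set.Icc (1:Ordinal.{v}) (n:Ordinal.{v}))) := by
  refine ⟨Equiv.ofBijective (fun i => ⟨((((i:ℕ)+1 : ℕ)):Ordinal.{v}), ?_, ?_⟩) ⟨?_, ?_⟩⟩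
  · exact_mod_cast Nat.one_le_cast.mpr (Nat.succ_le_succ (Nat.zero_le _))
  · exact_mod_cast Nat.cast_le.mpr (Nat.succ_le_of_lt i.isLt)
  · intro i j hij
    simp only [Subtype.mk.injEq, Nat.cast_inj] at hij
    have h : (((i:ℕ)+1 : ℕ) : Ordinal.{v}) = (((j:ℕ)+1 : ℕ) : Ordinal.{v}) := congrArg Subtype.val hij
    exact Fin.ext (by have := Nat.cast_inj.mp h; omega)
  · rintro ⟨y, hy1, hy2⟩
    have hylt : y < Ordinal.omega0 := lt_of_le_of_lt hy2 (Ordinal.nat_lt_omega0 n)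
    obtain ⟨m, rfl⟩ := Ordinal.lt_omega0.mp hylt
    have hm1 : 1 ≤ m := by exact_mod_cast hy1
    have hmn : m ≤ n := by exact_mod_cast hy2
    refine ⟨⟨m - 1, by omega⟩, ?_⟩
    apply Subtype.ext
    simp only [Nat.cast_inj]
    exact_mod_cast congrArg (Nat.cast : ℕ → Ordinal.{v}) (by omega : m - 1 + 1 = m)

lemma nat_card_icc (n : ℕ) : Nat.card (Set.Icc (1:Ordinal.{v}) (n:Ordinal.{v})) = n := by
  obtain ⟨e⟩ := natCast_icc_equiv.{v} n
  exact Nat.card_eq_of_equiv_fin e.symm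

/-- Base case: a finite (T1) space of cardinality `n` is homeomorphic to `[1,n]`. -/
lemma homeo_finite {K : Type*} [TopologicalSpace K] [T2Space K]
    (h : (Set.univ : Set K).Finite) {n : ℕ}
    (hcard : (Set.univ : Set K).ncard = n) :
    Nonempty (K ≃ₜ (Set.Icc (1:Ordinal.{v}) (n:Ordinal.{v}))) := by
  have hfin : Finite K := Set.finite_univ_iff.mp h
  have hfin2 : Finite (Set.Icc (1:Ordinal.{v}) (n:Ordinal.{v})) := by
    obtain ⟨e⟩ := natCast_icc_equiv.{v} n
    exact Finite.of_equiv _ e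
  have hcard2 : Nat.card K = Nat.card (Set.Icc (1:Ordinal.{v}) (n:Ordinal.{v})) := by
    rw [nat_card_icc]
    rw [← hcard, Set.ncard_univ]
  let e : K ≃ (Set.Icc (1:Ordinal.{v}) (n:Ordinal.{v})) :=
    (Finite.equivFinOfCardEq hcard2).trans (Finite.equivFin _).symm
  exact ⟨⟨e, continuous_of_discreteTopology, continuous_of_discreteTopology⟩⟩
end

section
open Topology Ordinal Filter
universe u v

lemma one_case {β : Ordinal.{v}} (hβ : β ≠ 0)
    (IH : ∀ β' < β, ∀ (K' : Type u) [TopologicalSpace K'] [CompactSpace K'] [T2Space K']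
      [Countable K'],
      ∀ n : ℕ, (cbIter (Set.univ : Set K') β').Finite →
        (cbIter (Set.univ : Set K') β').ncard = n+1 →
      Nonempty (K' ≃ₜ (Set.Icc (1:Ordinal.{v}) (ω ^ β' * (n+1)))))
    (K : Type u) [TopologicalSpace K] [CompactSpace K] [T2Space K] [Countable K]
    {p : K} (hp : cbIter (Set.univ : Set K) β = {p}) :
    Nonempty (K ≃ₜ (Set.Icc (1:Ordinal.{v}) (ω ^ β))) := by
  classical
  have hNK : Nonempty K := ⟨p⟩
  have hppos : (0:Ordinal.{v}) < ω ^ β := Ordinal.opow_pos β Ordinal.omega0_pos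
  have hp1 : (1:Ordinal.{v}) ≤ ω ^ β := Order.one_le_iff_pos.mpr hppos
  -- minimality: all earlier derived sets are infinite
  have hinf : ∀ b < β, (cbIter (Set.univ : Set K) b).Infinite := by
    intro b hb
    intro hfin
    have h1 : cbIter (Set.univ : Set K) (b+1) = ∅ := by
      rw [cbIter_succ]; exact derivedSet_of_finite hfin
    have h2 : cbIter (Set.univ : Set K) β ⊆ cbIter (Set.univ : Set K) (b+1) :=
      cbIter_anti isClosed_univ (by rw [Ordinal.add_one_eq_succ]; exact Order.succ_le_iff.mpr hb)
    rw [hp, h1] at h2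
    exact h2 rfl
  -- clopen neighborhoods avoiding p
  have hW : ∀ x : K, ∃ W : Set K, IsClopen W ∧ p ∉ W ∧ (x ≠ p → x ∈ W) := by
    intro x
    by_cases hx : x = p
    · exact ⟨∅, isClopen_empty, fun h => h, fun h => absurd hx h⟩
    · obtain ⟨U, hU, hxU, hpU⟩ := exists_isClopen_of_countable hx
      exact ⟨U, hU, hpU, fun _ => hxU⟩
  choose W hWclopen hWp hWmem using hW
  obtain ⟨e, he⟩ := exists_surjective_nat K
  -- increasing clopen exhaustion of K \ {p}
  set C : ℕ → Set K := fun i => ⋃ j ∈ Finset.range (i+1), W (e j) with hC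
  have hCclopen : ∀ i, IsClopen (C i) := fun i =>
    isClopen_biUnion_finset (fun j _ => hWclopen (e j))
  have hCp : ∀ i, p ∉ C i := by
    intro i hmem
    obtain ⟨j, _, hj⟩ := Set.mem_iUnion₂.mp hmem
    exact hWp (e j) hj
  have hCmono : ∀ {i j}, i ≤ j → C i ⊆ C j := by
    intro i j hij
    intro x hx
    obtain ⟨k, hk, hxk⟩ := Set.mem_iUnion₂.mp hx
    have hk' := Finset.mem_range.mp hk
    exact Set.mem_biUnion (Finset.mem_range.mpr (by omega)) hxk
  have hCcover : ∀ x : K, x ≠ p → ∃ i, x ∈ C i := by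
    intro x hx
    obtain ⟨j, rfl⟩ := he x
    exact ⟨j, Set.mem_biUnion (Finset.self_mem_range_succ j) (hWmem _ hx)⟩
  -- disjointification
  set D : ℕ → Set K := fun i => match i with
    | 0 => C 0
    | (j+1) => C (j+1) \ C j with hD
  have hDclopen : ∀ i, IsClopen (D i) := by
    intro i
    match i with
    | 0 => exact hCclopen 0
    | (j+1) => exact (hCclopen (j+1)).diff (hCclopen j)
  have hDsubC : ∀ i, D i ⊆ C i := by
    intro i
    match i with
    | 0 => exact subset_rfl
    | (j+1) => exact Set.diff_subset
  have hDp : ∀ i, p ∉ D i := fun i h => hCp i (hDsubC i h)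
  have hDcoverC : ∀ i x, x ∈ C i → ∃ j ≤ i, x ∈ D j := by
    intro i
    induction i with
    | zero => exact fun x hx => ⟨0, le_rfl, hx⟩
    | succ j ihj =>
      intro x hx
      by_cases hxj : x ∈ C j
      · obtain ⟨k, hk, hkx⟩ := ihj x hxj
        exact ⟨k, hk.trans (Nat.le_succ j), hkx⟩
      · exact ⟨j+1, le_rfl, ⟨hx, hxj⟩⟩
  have hDcover : ∀ x : K, x ≠ p → ∃ i, x ∈ D i := by
    intro x hx
    obtain ⟨i, hi⟩ := hCcover x hx
    obtain ⟨j, _, hj⟩ := hDcoverC i x hi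
    exact ⟨j, hj⟩
  have hDnotC : ∀ {i j}, i < j → ∀ x ∈ D j, x ∉ C i := by
    intro i j hij x hxj hxi
    match j, hij with
    | (k+1), hij =>
      exact hxj.2 (hCmono (by omega) hxi)
  have hdisj : ∀ x i j, x ∈ D i → x ∈ D j → i = j := by
    intro x i j hi hj
    by_contra hne
    rcases lt_or_gt_of_ne hne with h | h
    · exact hDnotC h x hj (hDsubC i hi)
    · exact hDnotC h x hi (hDsubC j hj)
  -- per-piece classification
  have piece : ∀ i : ℕ, ∃ γ : Ordinal.{v}, γ < ω ^ β ∧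
      Nonempty ((D i) ≃ₜ (Set.Icc (1:Ordinal.{v}) γ)) ∧
      (∀ b < β, (cbIter (Set.univ : Set K) b ∩ D i).Nonempty → ω ^ b ≤ γ) ∧
      (∀ b, (cbIter (Set.univ : Set K) b ∩ D i).Infinite → b < β ∧ β ≠ b+1) := by
    intro i
    rcases Set.eq_empty_or_nonempty (D i) with hDe | hDne
    · refine ⟨0, hppos, ?_, ?_, ?_⟩
      · have h1 : IsEmpty (D i) := by rw [hDe]; exact Set.isEmpty_coe_sort.mpr rfl
        have h2 : IsEmpty (Set.Icc (1:Ordinal.{v}) 0) := by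
          constructor; rintro ⟨y, hy1, hy2⟩
          exact absurd (hy1.trans hy2) (by simp)
        exact ⟨Equiv.equivOfIsEmpty _ _,
          continuous_iff_continuousAt.mpr (fun x => isEmptyElim x),
          continuous_iff_continuousAt.mpr (fun x => isEmptyElim x)⟩
      · intro b _ hne; rw [hDe, Set.inter_empty] at hne; exact absurd hne (by simp)
      · intro b hne; rw [hDe, Set.inter_empty] at hne
        exact absurd hne (by simp [Set.not_infinite])
    · have hDop : IsOpen (D i) := (hDclopen i).2
      have hDcl : IsClosed (D i) := (hDclopen i).1
      haveI : CompactSpace (D i) := isCompact_iff_compactSpace.mp hDcl.isCompact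
      haveI : Nonempty (D i) := hDne.to_subtype
      obtain ⟨bi, hbfin, hbne⟩ := exists_cb_finite_nonempty.{_,v} (X := (D i))
      have hpre : ∀ b : Ordinal.{v}, cbIter (Set.univ : Set (D i)) b
          = Subtype.val ⁻¹' (cbIter (Set.univ : Set K) b) := fun b => cbIter_preimage_val hDop b
      -- bi < β
      have hbilt : bi < β := by
        by_contra hge
        push_neg at hge
        have h1 : cbIter (Set.univ : Set K) bi ⊆ {p} := by
          rw [← hp]; exact cbIter_anti isClosed_univ hge
        obtain ⟨⟨x, hxD⟩, hx⟩ := hbne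
        rw [hpre] at hx
        have : x = p := h1 hx
        exact hDp i (this ▸ hxD)
      obtain ⟨m, hm⟩ := Nat.exists_eq_add_of_lt (Set.ncard_pos hbfin |>.mpr hbne)
      have hcard : (cbIter (Set.univ : Set (D i)) bi).ncard = m + 1 := by omega
      obtain ⟨eq⟩ := IH bi hbilt (D i) m hbfin hcard
      refine ⟨ω ^ bi * (m+1), ?_, ⟨eq⟩, ?_, ?_⟩
      · calc ω ^ bi * ((m:Ordinal.{v})+1) < ω ^ bi * ω := by
              apply mul_lt_mul_of_pos_left _ (Ordinal.opow_pos bi Ordinal.omega0_pos)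
              exact_mod_cast Ordinal.nat_lt_omega0 (m+1)
        _ = ω ^ (bi+1) := by rw [Ordinal.add_one_eq_succ, Ordinal.opow_succ]
        _ ≤ ω ^ β := Ordinal.opow_le_opow_right Ordinal.omega0_pos
              (by rw [Ordinal.add_one_eq_succ]; exact Order.succ_le_iff.mpr hbilt)
      · intro b _ hbne'
        have hble : b ≤ bi := by
          by_contra hgt
          push_neg at hgt
          have h1 : cbIter (Set.univ : Set (D i)) b ⊆ cbIter (Set.univ : Set (D i)) (bi+1) :=
            cbIter_anti isClosed_univ
              (by rw [Ordinal.add_one_eq_succ]; exact Order.succ_le_iff.mpr hgt)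
          have h2 : cbIter (Set.univ : Set (D i)) (bi+1) = ∅ := by
            rw [cbIter_succ]; exact derivedSet_of_finite hbfin
          obtain ⟨x, hx1, hx2⟩ := hbne'
          have : (⟨x, hx2⟩ : D i) ∈ cbIter (Set.univ : Set (D i)) b := by
            rw [hpre]; exact hx1
          rw [h2] at h1
          exact h1 this
        calc ω ^ b ≤ ω ^ bi := Ordinal.opow_le_opow_right Ordinal.omega0_pos hble
        _ ≤ ω ^ bi * ((m:Ordinal.{v})+1) := Ordinal.le_mul_left _ (by exact_mod_cast Nat.succ_pos m)
      · intro b hbinf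
        have hble : b ≤ bi := by
          by_contra hgt
          push_neg at hgt
          have h1 : cbIter (Set.univ : Set (D i)) b ⊆ cbIter (Set.univ : Set (D i)) (bi+1) :=
            cbIter_anti isClosed_univ
              (by rw [Ordinal.add_one_eq_succ]; exact Order.succ_le_iff.mpr hgt)
          have h2 : cbIter (Set.univ : Set (D i)) (bi+1) = ∅ := by
            rw [cbIter_succ]; exact derivedSet_of_finite hbfin
          obtain ⟨x, hx1, hx2⟩ := hbinf.nonempty
          have : (⟨x, hx2⟩ : D i) ∈ cbIter (Set.univ : Set (D i)) b := by
            rw [hpre]; exact hx1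
          rw [h2] at h1
          exact h1 this
        refine ⟨lt_of_le_of_lt hble hbilt, ?_⟩
        intro hβeq
        have hbile : bi ≤ b := by
          rw [hβeq, Ordinal.add_one_eq_succ, Order.lt_succ_iff] at hbilt
          exact hbilt
        have hbe : b = bi := le_antisymm hble hbile
        subst hbe
        have h3 : (cbIter (Set.univ : Set K) b ∩ D i).Finite := by
          have := hbfin.image (Subtype.val : D i → K)
          rwa [hpre, Subtype.image_preimage_coe, Set.inter_comm] at this
        exact hbinf h3
  choose γ hγlt hhomeo hB hBig using piece
  let ei : ∀ i, (D i) ≃ₜ (Set.Icc (1:Ordinal.{v}) (γ i)) := fun i => Classical.choice (hhomeo i)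
  -- partial sums
  set s : ℕ → Ordinal.{v} := fun i => Nat.rec 0 (fun j acc => acc + γ j) i with hs
  have hs0 : s 0 = 0 := rfl
  have hssucc : ∀ i, s (i+1) = s i + γ i := fun i => rfl
  have hsmono : Monotone s := by
    apply monotone_nat_of_le_succ
    intro i
    rw [hssucc]
    exact le_self_add
  have hslt : ∀ i, s i < ω ^ β := by
    intro i
    induction i with
    | zero => rw [hs0]; exact hppos
    | succ j ihj =>
      rw [hssucc]
      exact Ordinal.principal_add_omega0_opow β ihj (hγlt j)
  -- cofinality of the partial sums in ω^β
  have key : ∀ c < ω ^ β, ∃ i, c < s i := by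
    rcases Ordinal.zero_or_succ_or_isSuccLimit β with h0 | ⟨b, hb⟩ | hl
    · exact absurd h0 hβ
    · rw [← Ordinal.add_one_eq_succ] at hb
      subst hb
      have claim1 : ∀ i₀ : ℕ, ∃ j, i₀ ≤ j ∧ (cbIter (Set.univ : Set K) b ∩ D j).Nonempty := by
        intro i₀
        by_contra hno
        push_neg at hno
        have hsub : cbIter (Set.univ : Set K) b ⊆
            {p} ∪ ⋃ j ∈ Finset.range i₀, (cbIter (Set.univ : Set K) b ∩ D j) := by
          intro x hx
          by_cases hxp : x = p
          · exact Or.inl (by simp [hxp])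
          · obtain ⟨j, hj⟩ := hDcover x hxp
            right
            have hji : j < i₀ := by
              by_contra hge
              push_neg at hge
              have hxmem : x ∈ cbIter (Set.univ : Set K) b ∩ D j := ⟨hx, hj⟩
              rw [hno j hge] at hxmem
              exact hxmem
            exact Set.mem_biUnion (Finset.mem_range.mpr hji) ⟨hx, hj⟩
        have hfin : ({p} ∪ ⋃ j ∈ Finset.range i₀,
            (cbIter (Set.univ : Set K) b ∩ D j) : Set K).Finite := by
          apply (Set.finite_singleton p).union
          apply Set.Finite.biUnion (Finset.range i₀).finite_toSet
          intro j _
          rw [← Set.not_infinite]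
          intro hinf'
          exact absurd rfl (hBig j b hinf').2
        exact (hinf b (lt_add_one b)) (hfin.subset hsub)
      have claim2 : ∀ m : ℕ, ∃ i, ω ^ b * m ≤ s i := by
        intro m
        induction m with
        | zero => exact ⟨0, by simp⟩
        | succ m ihm =>
          obtain ⟨i, hi⟩ := ihm
          obtain ⟨j, hij, hne⟩ := claim1 i
          have hγj : ω ^ b ≤ γ j := hB j b (lt_add_one b) hne
          refine ⟨j+1, ?_⟩
          rw [hssucc]
          calc ω ^ b * ((m:Ordinal.{v})+1) = ω ^ b * m + ω ^ b := by
                rw [Ordinal.add_one_eq_succ, Ordinal.mul_succ]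
          _ ≤ s i + ω ^ b := add_le_add_left hi _
          _ ≤ s j + γ j := add_le_add (hsmono hij) hγj
      intro c hc
      rw [Ordinal.add_one_eq_succ, Ordinal.opow_succ,
        Ordinal.lt_mul_iff_of_isSuccLimit Ordinal.isSuccLimit_omega0] at hc
      obtain ⟨c', hc'lt, hc'⟩ := hc
      obtain ⟨m, rfl⟩ := Ordinal.lt_omega0.mp hc'lt
      obtain ⟨i, hi⟩ := claim2 m
      exact ⟨i, hc'.trans_le hi⟩
    · intro c hc
      have hex : ∃ b < β, c < ω ^ b := by
        by_contra hno
        push_neg at hno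
        exact absurd (((Ordinal.isNormal_opow Ordinal.one_lt_omega0).le_iff_forall_le hl).mpr hno)
          (not_le.mpr hc)
      obtain ⟨b, hbβ, hcb⟩ := hex
      obtain ⟨x, hx1, hx2⟩ := ((hinf b hbβ).diff (Set.finite_singleton p)).nonempty
      have hxp : x ≠ p := by simpa using hx2
      obtain ⟨j, hj⟩ := hDcover x hxp
      have hγj : ω ^ b ≤ γ j := hB j b hbβ ⟨x, hx1, hj⟩
      refine ⟨j+1, ?_⟩
      rw [hssucc]
      exact lt_of_lt_of_le (hcb.trans_le hγj) le_add_self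
  -- the map
  set g : K → Ordinal.{v} := fun x =>
    if h : x = p then ω ^ β
    else s (Nat.find (hDcover x h)) +
      (ei (Nat.find (hDcover x h)) ⟨x, Nat.find_spec (hDcover x h)⟩).1 with hg
  have hgp : g p = ω ^ β := dif_pos rfl
  have hgval : ∀ (x : K) (hx : x ≠ p) (i : ℕ) (hi : x ∈ D i),
      g x = s i + (ei i ⟨x, hi⟩).1 := by
    intro x hx i hi
    obtain rfl : i = Nat.find (hDcover x hx) :=
      (hdisj x (Nat.find (hDcover x hx)) i (Nat.find_spec (hDcover x hx)) hi).symm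
    simp only [hg]
    exact dif_neg hx
  have hglb : ∀ (x : K) (hx : x ≠ p) (i : ℕ) (hi : x ∈ D i), s i < g x := by
    intro x hx i hi
    rw [hgval x hx i hi]
    have h1 := (ei i ⟨x, hi⟩).2.1
    calc s i = s i + 0 := (add_zero _).symm
    _ < s i + (ei i ⟨x, hi⟩).1 := by
        rw [add_lt_add_iff_left]
        exact lt_of_lt_of_le zero_lt_one h1
  have hgub : ∀ (x : K) (hx : x ≠ p) (i : ℕ) (hi : x ∈ D i), g x ≤ s (i+1) := by
    intro x hx i hi
    rw [hgval x hx i hi, hssucc]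
    exact add_le_add_right (ei i ⟨x, hi⟩).2.2 _
  have hgmem : ∀ x : K, g x ∈ Set.Icc (1:Ordinal.{v}) (ω ^ β) := by
    intro x
    by_cases hx : x = p
    · rw [hx, hgp]; exact ⟨hp1, le_rfl⟩
    · obtain ⟨i, hi⟩ := hDcover x hx
      constructor
      · rw [hgval x hx i hi]
        exact ((ei i ⟨x, hi⟩).2.1).trans le_add_self
      · exact (hgub x hx i hi).trans (hslt (i+1)).le
  -- injectivity
  have hginj : Function.Injective g := by
    intro x y hxy
    by_cases hx : x = p <;> by_cases hy : y = p
    · rw [hx, hy]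
    · exfalso
      obtain ⟨j, hj⟩ := hDcover y hy
      have := (hgub y hy j hj).trans_lt (hslt (j+1))
      rw [← hxy, hx, hgp] at this
      exact lt_irrefl _ this
    · exfalso
      obtain ⟨i, hi⟩ := hDcover x hx
      have := (hgub x hx i hi).trans_lt (hslt (i+1))
      rw [hxy, hy, hgp] at this
      exact lt_irrefl _ this
    · obtain ⟨i, hi⟩ := hDcover x hx
      obtain ⟨j, hj⟩ := hDcover y hy
      have hij : i = j := by
        by_contra hne
        rcases lt_or_gt_of_ne hne with h | h
        · have h1 : g x ≤ s j := (hgub x hx i hi).trans (hsmono h)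
          exact absurd (hxy ▸ (hglb y hy j hj)) (not_lt.mpr h1)
        · have h1 : g y ≤ s i := (hgub y hy j hj).trans (hsmono h)
          exact absurd (hxy.symm ▸ (hglb x hx i hi)) (not_lt.mpr h1)
      subst hij
      rw [hgval x hx i hi, hgval y hy i hj] at hxy
      have h1 := (add_left_cancel_iff (a := s i)).mp hxy
      have h2 := (ei i).injective (Subtype.ext h1)
      exact congrArg Subtype.val h2
  -- surjectivity
  have hgsurj : ∀ y ∈ Set.Icc (1:Ordinal.{v}) (ω ^ β), ∃ x, g x = y := by
    rintro y ⟨hy1, hy2⟩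
    rcases eq_or_lt_of_le hy2 with rfl | hylt
    · exact ⟨p, hgp⟩
    · have hex : ∃ i, y ≤ s i := by
        obtain ⟨i, hi⟩ := key y hylt
        exact ⟨i, hi.le⟩
      have hfind := Nat.find_spec hex
      have h0 : Nat.find hex ≠ 0 := by
        intro h0
        rw [h0, hs0] at hfind
        exact absurd (hy1.trans hfind) (by simp)
      obtain ⟨j, hj⟩ := Nat.exists_eq_succ_of_ne_zero h0
      have hjlt : s j < y := by
        have := Nat.find_min hex (m := j) (by omega)
        push_neg at this
        exact this
      have hyub : y ≤ s j + γ j := by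
        rw [← hssucc j]
        have := hfind
        rw [hj] at this
        exact this
      have hsub1 : (1:Ordinal.{v}) ≤ y - s j := by
        rw [Ordinal.one_le_iff_ne_zero]
        intro h0'
        exact absurd (Ordinal.sub_eq_zero_iff_le.mp h0') (not_le.mpr hjlt)
      have hsub2 : y - s j ≤ γ j := by rw [Ordinal.sub_le]; exact hyub
      set x := (ei j).symm ⟨y - s j, hsub1, hsub2⟩ with hx
      have hxp : x.1 ≠ p := fun h => hDp j (h ▸ x.2)
      refine ⟨x.1, ?_⟩
      rw [hgval x.1 hxp j x.2]
      have : (⟨x.1, x.2⟩ : D j) = x := rfl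
      rw [this, hx, Homeomorph.apply_symm_apply]
      exact Ordinal.add_sub_cancel_of_le hjlt.le
  -- continuity
  have hgcont : Continuous g := by
    rw [continuous_iff_continuousAt]
    intro x
    have hcontp : ContinuousAt g p := by
      unfold ContinuousAt
      rw [hgp, tendsto_order]
      constructor
      · intro c hc
        obtain ⟨i, hi⟩ := key c hc
        have hopen : IsOpen ((C i)ᶜ) := (hCclopen i).1.isOpen_compl
        have hmem : p ∈ (C i)ᶜ := hCp i
        apply Filter.eventually_of_mem (hopen.mem_nhds hmem)
        intro z hz
        by_cases hzp : z = p
        · rw [hzp, hgp]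
          exact hc
        · obtain ⟨j, hj⟩ := hDcover z hzp
          have hji : i ≤ j := by
            by_contra hlt
            push_neg at hlt
            exact hz (hCmono hlt.le (hDsubC j hj))
          exact hi.trans_le ((hsmono hji).trans (hglb z hzp j hj).le)
      · intro c hc
        apply Filter.Eventually.of_forall
        intro z
        exact lt_of_le_of_lt (hgmem z).2 hc
    by_cases hx : x = p
    · exact hx ▸ hcontp
    · obtain ⟨i, hi⟩ := hDcover x hx
      apply ContinuousOn.continuousAt _ ((hDclopen i).2.mem_nhds hi)
      rw [continuousOn_iff_continuous_restrict]
      have hrestr : (D i).domRestrict g = fun u : D i => s i + (ei i u).1 := by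
        funext u
        have hup : u.1 ≠ p := fun h => hDp i (h ▸ u.2)
        rw [Set.restrict_apply, hgval u.1 hup i u.2]
      rw [hrestr]
      exact (continuous_ordinal_add_left (s i)).comp
        (continuous_subtype_val.comp (ei i).continuous)
  let f : K → (Set.Icc (1:Ordinal.{v}) (ω ^ β)) := fun x => ⟨g x, hgmem x⟩
  have hfbij : Function.Bijective f := by
    constructor
    · intro x y hxy
      exact hginj (congrArg Subtype.val hxy)
    · intro ⟨y, hy⟩
      obtain ⟨x, hxeq⟩ := hgsurj y hy
      exact ⟨x, Subtype.ext hxeq⟩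
  exact ⟨Continuous.homeoOfEquivCompactToT2 (f := Equiv.ofBijective f hfbij)
    (hgcont.subtype_mk _)⟩
end

section
open Topology Ordinal Filter
universe u v

lemma gen_case {β : Ordinal.{v}}
    (hone : ∀ (K' : Type u) [TopologicalSpace K'] [CompactSpace K'] [T2Space K']
      [Countable K'], ∀ p : K', cbIter (Set.univ : Set K') β = {p} →
      Nonempty (K' ≃ₜ (Set.Icc (1:Ordinal.{v}) (ω ^ β)))) :
    ∀ (n : ℕ) (K : Type u) [TopologicalSpace K] [CompactSpace K] [T2Space K] [Countable K],
      (cbIter (Set.univ : Set K) β).Finite → (cbIter (Set.univ : Set K) β).ncard = n+1 →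
      Nonempty (K ≃ₜ (Set.Icc (1:Ordinal.{v}) (ω ^ β * (n+1)))) := by
  intro n
  induction n with
  | zero =>
    intro K _ _ _ _ hfin hcard
    obtain ⟨p, hp⟩ := Set.ncard_eq_one.mp hcard
    obtain ⟨e⟩ := hone K p hp
    refine ⟨e.trans (Homeomorph.setCongr ?_)⟩
    norm_num
  | succ m ihm =>
    intro K _ _ _ _ hfin hcard
    classical
    set S := cbIter (Set.univ : Set K) β with hS
    obtain ⟨p₀, p₁, hp₀S, hp₁S, hp01⟩ := (Set.one_lt_ncard_iff hfin).mp (by omega)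
    -- clopen sets separating p₀ from each other point of S
    have hWex : ∀ q : K, ∃ Wq : Set K, IsClopen Wq ∧ (q ≠ p₀ → (p₀ ∈ Wq ∧ q ∉ Wq)) := by
      intro q
      by_cases hq : q = p₀
      · exact ⟨∅, isClopen_empty, fun h => absurd hq h⟩
      · obtain ⟨U, hU, h1, h2⟩ := exists_isClopen_of_countable (x := p₀) (p := q) (Ne.symm hq)
        exact ⟨U, hU, fun _ => ⟨h1, h2⟩⟩
    choose Wq hWqclopen hWq using hWex
    set V : Set K := ⋂ q ∈ (S \ {p₀}), Wq q with hV
    have hVclopen : IsClopen V := Set.Finite.isClopen_biInter (hfin.diff)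
      (fun q _ => hWqclopen q)
    have hp₀V : p₀ ∈ V := by
      apply Set.mem_biInter
      intro q hq
      exact (hWq q (fun h => hq.2 (by rw [h]; rfl))).1
    have hVS : S ∩ V = {p₀} := by
      apply subset_antisymm
      · rintro x ⟨hxS, hxV⟩
        by_contra hxp
        have hxmem : x ∈ S \ {p₀} := ⟨hxS, hxp⟩
        have := Set.biInter_subset_of_mem (s := S \ {p₀}) (t := fun q => Wq q) hxmem hxV
        exact (hWq x (fun h => hxp (by rw [h]; rfl))).2 this
      · rintro x hx
        rw [Set.mem_singleton_iff] at hx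
        subst hx
        exact ⟨hp₀S, hp₀V⟩
    have hVcS : S ∩ Vᶜ = S \ {p₀} := by
      apply subset_antisymm
      · rintro x ⟨hxS, hxV⟩
        refine ⟨hxS, fun hxp => hxV (by rw [Set.mem_singleton_iff] at hxp; rw [hxp]; exact hp₀V)⟩
      · rintro x ⟨hxS, hxp⟩
        refine ⟨hxS, fun hxV => ?_⟩
        have := Set.biInter_subset_of_mem (s := S \ {p₀}) (t := fun q => Wq q) (⟨hxS, hxp⟩ : x ∈ S \ {p₀}) hxV
        exact (hWq x (fun h => hxp (by rw [h]; rfl))).2 this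
    -- the V piece
    haveI hVcomp : CompactSpace V := isCompact_iff_compactSpace.mp hVclopen.1.isCompact
    haveI hVccomp : CompactSpace (Vᶜ : Set K) :=
      isCompact_iff_compactSpace.mp hVclopen.compl.1.isCompact
    have hpreV : cbIter (Set.univ : Set V) β = Subtype.val ⁻¹' S :=
      cbIter_preimage_val hVclopen.2 β
    have hpreVc : cbIter (Set.univ : Set (Vᶜ : Set K)) β = Subtype.val ⁻¹' S :=
      cbIter_preimage_val hVclopen.compl.2 β
    have hVsingle : cbIter (Set.univ : Set V) β = {⟨p₀, hp₀V⟩} := by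
      rw [hpreV]
      ext ⟨x, hxV⟩
      simp only [Set.mem_preimage, Set.mem_singleton_iff, Subtype.mk.injEq]
      constructor
      · intro hxS
        have : x ∈ S ∩ V := ⟨hxS, hxV⟩
        rw [hVS] at this
        exact this
      · rintro rfl
        exact hp₀S
    obtain ⟨eV⟩ := hone V ⟨p₀, hp₀V⟩ hVsingle
    -- the Vᶜ piece
    have hVcfin : (cbIter (Set.univ : Set (Vᶜ : Set K)) β).Finite := by
      rw [hpreVc]
      exact hfin.preimage (Set.injOn_of_injective Subtype.val_injective)
    have hVccard : (cbIter (Set.univ : Set (Vᶜ : Set K)) β).ncard = m+1 := by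
      rw [hpreVc]
      have h1 : (Subtype.val '' ((Subtype.val : (Vᶜ : Set K) → K) ⁻¹' S)).ncard
          = (Subtype.val ⁻¹' S : Set (Vᶜ : Set K)).ncard :=
        Set.ncard_image_of_injective _ Subtype.val_injective
      rw [← h1, Subtype.image_preimage_coe, Set.inter_comm, hVcS,
        Set.ncard_diff_singleton_of_mem hp₀S, hcard]
      omega
    obtain ⟨eVc⟩ := ihm (Vᶜ : Set K) hVcfin hVccard
    -- glue
    obtain ⟨efin⟩ := homeo_sum (X := K) hVclopen.compl eVc
      ((Homeomorph.setCongr (compl_compl V)).trans eV)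
    refine ⟨efin.trans (Homeomorph.setCongr ?_)⟩
    congr 1
    have : ((m:Ordinal.{v}) + 1) + 1 = Order.succ ((m:Ordinal.{v}) + 1) := by
      rw [Ordinal.add_one_eq_succ]
    push_cast
    rw [this, Ordinal.mul_succ]

theorem cb_main : ∀ β : Ordinal.{v}, ∀ (K : Type u) [TopologicalSpace K] [CompactSpace K]
    [T2Space K] [Countable K], ∀ n : ℕ,
    (cbIter (Set.univ : Set K) β).Finite → (cbIter (Set.univ : Set K) β).ncard = n+1 →
    Nonempty (K ≃ₜ (Set.Icc (1:Ordinal.{v}) (ω ^ β * (n+1)))) := by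
  intro β
  induction β using Ordinal.induction with
  | h β IH =>
    intro K _ _ _ _ n hfin hcard
    rcases eq_or_ne β 0 with rfl | hβ0
    · rw [cbIter_zero] at hfin hcard
      obtain ⟨e⟩ := homeo_finite.{_,v} hfin (n := n+1) hcard
      refine ⟨e.trans (Homeomorph.setCongr ?_)⟩
      congr 1
      rw [Ordinal.opow_zero, one_mul]
      push_cast
      rfl
    · refine gen_case (β := β) ?_ n K hfin hcard
      intro K' _ _ _ _ p hp
      exact one_case hβ0 IH K' hp
end

/-- **Mazurkiewicz–Sierpiński**: a countable compact Hausdorff space is homeomorphic to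
`[1, ω^β · n]` where `n` is the (finite, positive) cardinality of the `β`-th derived set. -/
theorem stmt0 (K : Type*) [TopologicalSpace K] [CompactSpace K] [T2Space K]
    [Countable K] [Nonempty K] :
    ∃ (β : Ordinal) (n : ℕ), 0 < n ∧ (cbIter (Set.univ : Set K) β).ncard = n ∧
      Nonempty (K ≃ₜ ↥(Set.Icc (1 : Ordinal) (ω ^ β * n))) := by
  obtain ⟨β, hfin, hne⟩ := exists_cb_finite_nonempty (X := K)
  obtain ⟨m, hm⟩ : ∃ m, (cbIter (Set.univ : Set K) β).ncard = m + 1 := by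
    have := (Set.ncard_pos hfin).mpr hne
    exact ⟨(cbIter (Set.univ : Set K) β).ncard - 1, by omega⟩
  obtain ⟨e⟩ := cb_main β K m hfin hm
  refine ⟨β, m+1, Nat.succ_pos m, hm, ⟨e.trans (Homeomorph.setCongr ?_)⟩⟩
  congr 2
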